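/- Let V be binomially distributed with parameters n ≥ 1 and λ ∈ (0,1), and set X = n − V. Then E( V/(1+X) ) ≤ λ/(1−λ). -/

import Mathlib

/-- Expectation of `f V` for `V ~ Bin(n, lam)`. -/
noncomputable def binomExp (n : ℕ) (lam : ℝ) (f : ℕ → ℝ) : ℝ :=
  ∑ v ∈ Finset.range (n + 1), (n.choose v : ℝ) * lam ^ v * (1 - lam) ^ (n - v) * f v

/-- For `V ~ Bin(n, lam)` and `X = n - V`, `E(V/(1+X)) ≤ lam/(1-lam)`. -/
theorem binomial_ratio_expectation (n : ℕ) (hn : 1 ≤ n) (lam : ℝ)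
    (hlam : lam ∈ Set.Ioo (0 : ℝ) 1) :
    binomExp n lam (fun v => (v : ℝ) / (1 + (n - v : ℕ))) ≤ lam / (1 - lam) := by
  obtain ⟨h0, h1⟩ := hlam
  have h1' : (0:ℝ) < 1 - lam := by linarith
  unfold binomExp
  rw [Finset.sum_range_succ']
  have hz : (n.choose 0 : ℝ) * lam ^ 0 * (1 - lam) ^ (n - 0) *
      (((0:ℕ):ℝ) / (1 + ((n - 0 : ℕ) : ℝ))) = 0 := by simp
  simp only [hz, add_zero]
  have key : ∀ v ∈ Finset.range n,
      (n.choose (v+1) : ℝ) * lam ^ (v+1) * (1 - lam) ^ (n - (v+1)) *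
        (((v+1 : ℕ) : ℝ) / (1 + ((n - (v+1) : ℕ) : ℝ))) =
      lam / (1 - lam) * ((n.choose v : ℝ) * lam ^ v * (1 - lam) ^ (n - v)) := by
    intro v hv
    rw [Finset.mem_range] at hv
    have h2 : n - (v+1) + 1 = n - v := by omega
    have h3 : n - v = (n - (v+1)) + 1 := by omega
    have hnv : ((n - v : ℕ) : ℝ) ≠ 0 := by
      have : n - v ≠ 0 := by omega
      exact_mod_cast Nat.cast_ne_zero.mpr this
    have hchn : (v+1) * n.choose (v+1) = (n - v) * n.choose v := by
      have h := Nat.choose_succ_right_eq n v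
      rw [mul_comm, h, mul_comm]
    have hch : ((v+1 : ℕ) : ℝ) * (n.choose (v+1) : ℝ) = ((n - v : ℕ) : ℝ) * (n.choose v : ℝ) := by
      exact_mod_cast congrArg (Nat.cast : ℕ → ℝ) hchn
    have hden : (1:ℝ) + ((n - (v+1) : ℕ) : ℝ) = ((n - v : ℕ) : ℝ) := by
      rw [← h2]; push_cast; ring
    rw [hden]
    calc (n.choose (v+1) : ℝ) * lam ^ (v+1) * (1 - lam) ^ (n - (v+1)) *
          (((v+1 : ℕ) : ℝ) / ((n - v : ℕ) : ℝ))
        = (((v+1 : ℕ) : ℝ) * (n.choose (v+1) : ℝ)) *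
            (lam ^ (v+1) * (1 - lam) ^ (n - (v+1)) / ((n - v : ℕ) : ℝ)) := by ring
      _ = (((n - v : ℕ) : ℝ) * (n.choose v : ℝ)) *
            (lam ^ (v+1) * (1 - lam) ^ (n - (v+1)) / ((n - v : ℕ) : ℝ)) := by rw [hch]
      _ = lam / (1 - lam) * ((n.choose v : ℝ) * lam ^ v * (1 - lam) ^ (n - v)) := by
          rw [h3, pow_succ, pow_succ]
          field_simp
  rw [Finset.sum_congr rfl key, ← Finset.mul_sum]
  have hnonneg : ∀ v, (0:ℝ) ≤ (n.choose v : ℝ) * lam ^ v * (1 - lam) ^ (n - v) := by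
    intro v
    have := pow_nonneg h0.le v
    have := pow_nonneg h1'.le (n - v)
    positivity
  have hsum1 : ∑ v ∈ Finset.range (n+1), (n.choose v : ℝ) * lam ^ v * (1 - lam) ^ (n - v) = 1 := by
    have h := (add_pow lam (1 - lam) n)
    have he : lam + (1 - lam) = 1 := by ring
    rw [he, one_pow] at h
    calc ∑ v ∈ Finset.range (n+1), (n.choose v : ℝ) * lam ^ v * (1 - lam) ^ (n - v)
        = ∑ v ∈ Finset.range (n+1), lam ^ v * (1 - lam) ^ (n - v) * (n.choose v : ℝ) :=
          Finset.sum_congr rfl (fun k _ => by ring)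
      _ = 1 := h.symm
  have hle : ∑ v ∈ Finset.range n, (n.choose v : ℝ) * lam ^ v * (1 - lam) ^ (n - v) ≤ 1 := by
    calc ∑ v ∈ Finset.range n, (n.choose v : ℝ) * lam ^ v * (1 - lam) ^ (n - v)
        ≤ ∑ v ∈ Finset.range (n+1), (n.choose v : ℝ) * lam ^ v * (1 - lam) ^ (n - v) :=
          Finset.sum_le_sum_of_subset_of_nonneg
            (Finset.range_subset_range.mpr (Nat.le_succ n)) (fun i _ _ => hnonneg i)
      _ = 1 := hsum1
  have hfrac : (0:ℝ) ≤ lam / (1 - lam) := div_nonneg h0.le h1'.le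
  calc lam / (1 - lam) * ∑ v ∈ Finset.range n, (n.choose v : ℝ) * lam ^ v * (1 - lam) ^ (n - v)
      ≤ lam / (1 - lam) * 1 := mul_le_mul_of_nonneg_left hle hfrac
    _ = lam / (1 - lam) := mul_one _
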